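/- Define a(t) = (t^6 + 3t^5 - 5t^3 + 12t + 11)/(2(t^2+t-1)^3), b(t) = -3(t^2+1)(t^4+3t^3-t^2-3t+1)/((t^2+t-1)^3), c(t) = -(11t^6 - 12t^5 + 5t^3 - 3t + 1)/(2(t^2+t-1)^3). Let x(u) = u^2(u-1)/(u+1), y(u) = (u^2+1)(u^4-2u^3-6u^2+2u+1)/(2(u+1)^2), and s(u) = a(t)x(u)^2 + b(t)x(u) + c(t). Then for every t ∉ {0, -1, 1, roots of t^2+t-1}, the function u ↦ s(u) - y(u) vanishes to order at least 3 at u = t. -/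

import Mathlib

/-- The parametrization `x(u)` of the trigonal curve. -/
noncomputable def paramX (u : ℝ) : ℝ := u ^ 2 * (u - 1) / (u + 1)

/-- The parametrization `y(u)` of the trigonal curve. -/
noncomputable def paramY (u : ℝ) : ℝ :=
  (u ^ 2 + 1) * (u ^ 4 - 2 * u ^ 3 - 6 * u ^ 2 + 2 * u + 1) / (2 * (u + 1) ^ 2)

/-- Coefficient `a(t)` of the inflection-tangent section. -/
noncomputable def inflA (t : ℝ) : ℝ :=
  (t ^ 6 + 3 * t ^ 5 - 5 * t ^ 3 + 12 * t + 11) / (2 * (t ^ 2 + t - 1) ^ 3)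

/-- Coefficient `b(t)` of the inflection-tangent section. -/
noncomputable def inflB (t : ℝ) : ℝ :=
  -3 * (t ^ 2 + 1) * (t ^ 4 + 3 * t ^ 3 - t ^ 2 - 3 * t + 1) / ((t ^ 2 + t - 1) ^ 3)

/-- Coefficient `c(t)` of the inflection-tangent section. -/
noncomputable def inflC (t : ℝ) : ℝ :=
  -(11 * t ^ 6 - 12 * t ^ 5 + 5 * t ^ 3 - 3 * t + 1) / (2 * (t ^ 2 + t - 1) ^ 3)

/-- If `g` agrees near `t` with `(u - t)^3 * r u` where `r` is nice, then `g`
vanishes to order at least 3 at `t`. -/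
lemma vanish_order_three (t : ℝ) (g r r' : ℝ → ℝ)
    (hr : ∀ᶠ u in nhds t, HasDerivAt r (r' u) u)
    (hr' : DifferentiableAt ℝ r' t)
    (hg : g =ᶠ[nhds t] fun u => (u - t) ^ 3 * r u) :
    g t = 0 ∧ deriv g t = 0 ∧ deriv (deriv g) t = 0 := by
  have hcube : ∀ s : ℝ, HasDerivAt (fun u : ℝ => (u - t) ^ 3) (3 * (s - t) ^ 2) s := by
    intro s
    simpa using ((hasDerivAt_id s).sub_const t).fun_pow 3
  have hsq : ∀ s : ℝ, HasDerivAt (fun u : ℝ => 3 * (u - t) ^ 2) (6 * (s - t)) s := by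
    intro s
    have h := (((hasDerivAt_id s).sub_const t).fun_pow 2).const_mul (3 : ℝ)
    refine h.congr_deriv ?_
    simp; ring
  have hf : ∀ᶠ u in nhds t, HasDerivAt (fun v => (v - t) ^ 3 * r v)
      (3 * (u - t) ^ 2 * r u + (u - t) ^ 3 * r' u) u := by
    filter_upwards [hr] with u hu
    exact (hcube u).mul hu
  have h1 : g t = 0 := by
    rw [hg.eq_of_nhds]; simp
  have hdg : deriv g t = 0 := by
    rw [hg.deriv_eq, hf.self_of_nhds.deriv]
    simp
  have hderiv_eq : deriv g =ᶠ[nhds t]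
      fun u => 3 * (u - t) ^ 2 * r u + (u - t) ^ 3 * r' u := by
    refine hg.deriv.trans ?_
    filter_upwards [hf] with u hu
    exact hu.deriv
  refine ⟨h1, hdg, ?_⟩
  rw [hderiv_eq.deriv_eq]
  have hrt : DifferentiableAt ℝ r t := (hr.self_of_nhds).differentiableAt
  have t1 : HasDerivAt (fun u => 3 * (u - t) ^ 2 * r u)
      (6 * (t - t) * r t + 3 * (t - t) ^ 2 * deriv r t) t :=
    (hsq t).mul hrt.hasDerivAt
  have t2 : HasDerivAt (fun u => (u - t) ^ 3 * r' u)
      (3 * (t - t) ^ 2 * r' t + (t - t) ^ 3 * deriv r' t) t :=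
    (hcube t).mul hr'.hasDerivAt
  rw [(t1.fun_add t2).deriv]
  simp

theorem stmt10 (t : ℝ) (h0 : t ≠ 0) (h1 : t ≠ -1) (h2 : t ≠ 1)
    (h3 : t ^ 2 + t - 1 ≠ 0) :
    let g : ℝ → ℝ := fun u =>
      (inflA t * (paramX u) ^ 2 + inflB t * paramX u + inflC t) - paramY u
    g t = 0 ∧ deriv g t = 0 ∧ deriv (deriv g) t = 0 := by
  intro g
  set P : ℝ → ℝ := fun u =>
    3 * ((3 * t + 4) * u ^ 3 + (9 * t ^ 2 + 6 * t - 8) * u ^ 2 +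
      (8 * t ^ 3 + 6 * t ^ 2 - 9 * t) * u + (4 * t ^ 3 - 3 * t ^ 2)) with hPdef
  set P' : ℝ → ℝ := fun u =>
    3 * (3 * (3 * t + 4) * u ^ 2 + 2 * (9 * t ^ 2 + 6 * t - 8) * u +
      (8 * t ^ 3 + 6 * t ^ 2 - 9 * t)) with hP'def
  set Q : ℝ → ℝ := fun u => 2 * (t ^ 2 + t - 1) ^ 3 * (u + 1) ^ 2 with hQdef
  set Q' : ℝ → ℝ := fun u => 4 * (t ^ 2 + t - 1) ^ 3 * (u + 1) with hQ'def
  set r : ℝ → ℝ := fun u => P u / Q u with hrdef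
  set r' : ℝ → ℝ := fun u => (P' u * Q u - P u * Q' u) / (Q u) ^ 2 with hr'def
  have ht1 : t + 1 ≠ 0 := fun h => h1 (by linarith)
  have hne : ∀ᶠ u in nhds t, u + 1 ≠ 0 := by
    have hc : ContinuousAt (fun u : ℝ => u + 1) t := by fun_prop
    exact hc.eventually_ne ht1
  have hQne : ∀ u : ℝ, u + 1 ≠ 0 → Q u ≠ 0 := by
    intro u hu
    simp only [hQdef]
    exact mul_ne_zero (mul_ne_zero two_ne_zero (pow_ne_zero _ h3)) (pow_ne_zero _ hu)
  have hP : ∀ u : ℝ, HasDerivAt P (P' u) u := by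
    intro u
    rw [hPdef, hP'def]
    have h := HasDerivAt.const_mul (3 : ℝ)
      ((((HasDerivAt.const_mul (3 * t + 4) (hasDerivAt_pow 3 u)).add
        (HasDerivAt.const_mul (9 * t ^ 2 + 6 * t - 8) (hasDerivAt_pow 2 u))).add
        (HasDerivAt.const_mul (8 * t ^ 3 + 6 * t ^ 2 - 9 * t) (hasDerivAt_id' u))).add_const
          (4 * t ^ 3 - 3 * t ^ 2))
    refine h.congr_deriv ?_
    push_cast
    ring
  have hQ : ∀ u : ℝ, HasDerivAt Q (Q' u) u := by
    intro u
    rw [hQdef, hQ'def]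
    have h := HasDerivAt.const_mul (2 * (t ^ 2 + t - 1) ^ 3)
      (((hasDerivAt_id' u).add_const (1 : ℝ)).pow 2)
    refine h.congr_deriv ?_
    push_cast
    ring
  have hr : ∀ᶠ u in nhds t, HasDerivAt r (r' u) u := by
    filter_upwards [hne] with u hu
    exact (hP u).div (hQ u) (hQne u hu)
  have hr' : DifferentiableAt ℝ r' t := by
    rw [hr'def]
    apply DifferentiableAt.div
    · have dP : DifferentiableAt ℝ P t := (hP t).differentiableAt
      have dQ : DifferentiableAt ℝ Q t := (hQ t).differentiableAt
      have dP' : DifferentiableAt ℝ P' t := by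
        rw [hP'def]; fun_prop
      have dQ' : DifferentiableAt ℝ Q' t := by
        rw [hQ'def]; fun_prop
      exact (dP'.mul dQ).sub (dP.mul dQ')
    · exact ((hQ t).differentiableAt.pow 2)
    · exact pow_ne_zero _ (hQne t ht1)
  have hg : g =ᶠ[nhds t] fun u => (u - t) ^ 3 * r u := by
    filter_upwards [hne] with u hu
    show (inflA t * (paramX u) ^ 2 + inflB t * paramX u + inflC t) - paramY u
        = (u - t) ^ 3 * r u
    simp only [hrdef, hPdef, hQdef, paramX, paramY, inflA, inflB, inflC]
    have hD : (t ^ 2 + t - 1) ^ 3 ≠ 0 := pow_ne_zero _ h3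
    have hD' : t * (t + 1) - 1 ≠ 0 := by rw [show t * (t + 1) - 1 = t ^ 2 + t - 1 by ring]; exact h3
    field_simp
    ring
  exact vanish_order_three t g r r' hr hr' hg
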